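/- Fix λ ∈ ℝ. Let p1,q1,r1,s1,v1,p2,q2,r2,s2,v2 : ℝ → ℝ be functions and a,b,c,e,f,g : ℝ → ℝ be differentiable functions satisfying, at every x ∈ ℝ, the six equations: a' = −q1 b λ + p1 c λ − v1 b + s1 c; b' = −2 p1 a λ + 2 b λ² − 2 s1 a − 2 r1 b; c' = 2 q1 a λ − 2 c λ² + 2 v1 a + 2 r1 c; e' = p1 g λ + p2 c λ − q2 b λ − q1 f λ + s1 g + s2 c − v1 f − v2 b; f' = 2 b λ² + 2 f λ² − 2 p1 e λ − 2 p2 a λ − 2 r1 f − 2 r2 b − 2 s1 e − 2 s2 a; g' = −2 c λ² − 2 g λ² + 2 q1 e λ + 2 q2 a λ + 2 r1 g + 2 r2 c + 2 v1 e + 2 v2 a. Then the function x ↦ 2 a(x) e(x) + f(x) c(x) + g(x) b(x) is constant on ℝ. -/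

import Mathlib

/-- If differentiable `a, b, c, e, f, g` satisfy the six scalar differential
equations of the enlarged stationary zero-curvature system at every `x`, then
`x ↦ 2·a(x)·e(x) + f(x)·c(x) + g(x)·b(x)` is constant on `ℝ`. -/
theorem two_ae_add_fc_add_gb_constant (lam : ℝ)
    (p1 q1 r1 s1 v1 p2 q2 r2 s2 v2 a b c e f g : ℝ → ℝ)
    (ha : ∀ x : ℝ, HasDerivAt a
      (-(q1 x) * b x * lam + p1 x * c x * lam - v1 x * b x + s1 x * c x) x)
    (hb : ∀ x : ℝ, HasDerivAt b
      (-2 * p1 x * a x * lam + 2 * b x * lam ^ 2 - 2 * s1 x * a x - 2 * r1 x * b x) x)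
    (hc : ∀ x : ℝ, HasDerivAt c
      (2 * q1 x * a x * lam - 2 * c x * lam ^ 2 + 2 * v1 x * a x + 2 * r1 x * c x) x)
    (he : ∀ x : ℝ, HasDerivAt e
      (p1 x * g x * lam + p2 x * c x * lam - q2 x * b x * lam - q1 x * f x * lam
        + s1 x * g x + s2 x * c x - v1 x * f x - v2 x * b x) x)
    (hf : ∀ x : ℝ, HasDerivAt f
      (2 * b x * lam ^ 2 + 2 * f x * lam ^ 2 - 2 * p1 x * e x * lam - 2 * p2 x * a x * lam
        - 2 * r1 x * f x - 2 * r2 x * b x - 2 * s1 x * e x - 2 * s2 x * a x) x)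
    (hg : ∀ x : ℝ, HasDerivAt g
      (-2 * c x * lam ^ 2 - 2 * g x * lam ^ 2 + 2 * q1 x * e x * lam + 2 * q2 x * a x * lam
        + 2 * r1 x * g x + 2 * r2 x * c x + 2 * v1 x * e x + 2 * v2 x * a x) x) :
    ∀ x y : ℝ, 2 * a x * e x + f x * c x + g x * b x
      = 2 * a y * e y + f y * c y + g y * b y := by

  have key : ∀ x : ℝ, HasDerivAt (fun x => 2 * a x * e x + f x * c x + g x * b x) 0 x := by
    intro x
    have h := (((ha x).const_mul 2).mul (he x)).add
      (((hf x).mul (hc x)).add ((hg x).mul (hb x)))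
    have hfun : (fun x => 2 * a x * e x + f x * c x + g x * b x) = (fun y => 2 * a y) * e + (f * c + g * b) := by
      funext y; simp only [Pi.mul_apply, Pi.add_apply]; ring
    rw [hfun]
    refine h.congr_deriv ?_
    ring
  intro x y
  have := is_const_of_deriv_eq_zero (f := fun x => 2 * a x * e x + f x * c x + g x * b x)
    (fun x => (key x).differentiableAt) (fun x => (key x).deriv) x y
  simpa using this
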